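/- arXiv:1703.02478 — 2 statements merged into one kernel-verified Lean document; each statement's English description precedes it below -/
import Mathlib

section
/- Let F be a subfield of ℂ that is finitely generated as a field extension of ℚ. Then the set {θ ∈ [0, π] : θ is a rational multiple of π and cos²θ ∈ F} is finite. -/
set_option maxHeartbeats 1000000
set_option synthInstance.maxHeartbeats 400000

open Polynomial IntermediateField

lemma pp_le {N m : ℕ} (hm : 0 < m) (h : m.totient ≤ N) {p : ℕ} (hp : p ∈ m.primeFactors) :
    0 < m.factorization p ∧ p ^ m.factorization p ≤ 2 * N := by
  have hmphi : 0 < m.totient := Nat.totient_pos.mpr hm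
  have hprime : p.Prime := Nat.prime_of_mem_primeFactors hp
  have hv : 0 < m.factorization p :=
    hprime.factorization_pos_of_dvd hm.ne' (Nat.dvd_of_mem_primeFactors hp)
  refine ⟨hv, ?_⟩
  have hdvd : (p ^ m.factorization p).totient ∣ m.totient :=
    Nat.totient_dvd_of_dvd (Nat.ordProj_dvd m p)
  have hle : (p ^ m.factorization p).totient ≤ N :=
    le_trans (Nat.le_of_dvd hmphi hdvd) h
  rw [Nat.totient_prime_pow hprime hv] at hle
  have hp2 : 2 ≤ p := hprime.two_le
  calc p ^ m.factorization p = p ^ (m.factorization p - 1) * p := by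
        rw [← pow_succ]; congr 1; omega
    _ ≤ p ^ (m.factorization p - 1) * ((p-1) * 2) := by
        apply Nat.mul_le_mul_left; omega
    _ = p ^ (m.factorization p - 1) * (p-1) * 2 := by ring
    _ ≤ N * 2 := by apply Nat.mul_le_mul_right; exact hle
    _ = 2 * N := by ring

lemma tot_bound {N m : ℕ} (hm : 0 < m) (h : m.totient ≤ N) : m ≤ (2*N)^(2*N) := by
  have hmphi : 0 < m.totient := Nat.totient_pos.mpr hm
  have hcard : m.primeFactors.card ≤ 2 * N := by
    have hsub : m.primeFactors ⊆ Finset.Icc 2 (2*N) := by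
      intro p hp
      obtain ⟨hv, hb⟩ := pp_le hm h hp
      have hprime : p.Prime := Nat.prime_of_mem_primeFactors hp
      have hps : p ≤ p ^ m.factorization p := Nat.le_self_pow hv.ne' p
      rw [Finset.mem_Icc]
      exact ⟨hprime.two_le, le_trans hps hb⟩
    calc m.primeFactors.card ≤ (Finset.Icc 2 (2*N)).card := Finset.card_le_card hsub
      _ ≤ 2*N := by rw [Nat.card_Icc]; omega
  calc m = m.factorization.prod (· ^ ·) := (Nat.factorization_prod_pow_eq_self hm.ne').symm
    _ = ∏ p ∈ m.primeFactors, p ^ m.factorization p := by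
        rw [Finsupp.prod, Nat.support_factorization]
    _ ≤ (2*N)^m.primeFactors.card :=
        Finset.prod_le_pow_card _ _ _ (fun p hp => (pp_le hm h hp).2)
    _ ≤ (2*N)^(2*N) := by
        apply Nat.pow_le_pow_right ?_ hcard
        have : 0 < N := lt_of_lt_of_le hmphi h
        omega

lemma roots_of_unity_finite (M : ℕ) : {z : ℂ | ∃ n, 0 < n ∧ n ≤ M ∧ z ^ n = 1}.Finite := by
  apply Set.Finite.subset (Polynomial.finite_setOf_isRoot
    (p := (Polynomial.X : Polynomial ℂ) ^ (M.factorial) - Polynomial.C 1) ?_)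
  · intro z ⟨n, hn0, hnM, hz⟩
    have hdvd : n ∣ M.factorial := Nat.dvd_factorial hn0 hnM
    obtain ⟨k, hk⟩ := hdvd
    simp only [Set.mem_setOf_eq, Polynomial.IsRoot, Polynomial.eval_sub, Polynomial.eval_pow,
      Polynomial.eval_X, Polynomial.eval_C, hk, pow_mul, hz, one_pow, sub_self]
  · apply Polynomial.X_pow_sub_C_ne_zero
    exact M.factorial_pos

lemma deg_le_of_mem (L : IntermediateField ℚ ℂ) [FiniteDimensional ℚ L] {α : ℂ} (h : α ∈ L) :
    (minpoly ℚ α).natDegree ≤ Module.finrank ℚ L := by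
  have heq : minpoly ℚ α = minpoly ℚ (⟨α, h⟩ : L) := by
    have heq2 := minpoly.algebraMap_eq (A := ℚ) (B := L) (B' := ℂ) (algebraMap L ℂ).injective ⟨α, h⟩
    simpa using heq2
  rw [heq]
  exact minpoly.natDegree_le _

lemma minpoly_tower_deg_le (E : IntermediateField ℚ ℂ) {a : ℂ} (ha : IsIntegral ℚ a) :
    (minpoly E a).natDegree ≤ (minpoly ℚ a).natDegree := by
  have hdvd := minpoly.dvd_map_of_isScalarTower ℚ E a
  have hne : (minpoly ℚ a).map (algebraMap ℚ E) ≠ 0 := by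
    simpa using minpoly.ne_zero ha
  calc (minpoly E a).natDegree ≤ ((minpoly ℚ a).map (algebraMap ℚ E)).natDegree :=
        Polynomial.natDegree_le_of_dvd hdvd hne
    _ = (minpoly ℚ a).natDegree := Polynomial.natDegree_map _

lemma adjoin_finset_bound {N : ℕ} (hN : 1 ≤ N) (t : Finset ℂ)
    (h : ∀ x ∈ t, IsIntegral ℚ x ∧ (minpoly ℚ x).natDegree ≤ N) :
    FiniteDimensional ℚ (adjoin ℚ (t : Set ℂ)) ∧
      Module.finrank ℚ (adjoin ℚ (t : Set ℂ)) ≤ N ^ t.card := by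
  classical
  induction t using Finset.induction_on with
  | empty =>
    constructor
    · rw [Finset.coe_empty, IntermediateField.adjoin_empty]
      infer_instance
    · rw [Finset.coe_empty, IntermediateField.adjoin_empty]
      simp [IntermediateField.finrank_bot]
  | @insert a t hat ih =>
    obtain ⟨ihfd, ihrank⟩ := ih (fun x hx => h x (Finset.mem_insert_of_mem hx))
    set E := adjoin ℚ (t : Set ℂ) with hE
    obtain ⟨haint, hadeg⟩ := h a (Finset.mem_insert_self a t)
    have haE : IsIntegral E a := haint.tower_top
    have hfd2 : FiniteDimensional E E⟮a⟯ := adjoin.finiteDimensional haE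
    have hcoe : (↑(insert a t) : Set ℂ) = (t : Set ℂ) ∪ {a} := by
      rw [Finset.coe_insert, Set.insert_eq, Set.union_comm]
    have hadj : adjoin ℚ (↑(insert a t) : Set ℂ) = restrictScalars ℚ E⟮a⟯ := by
      rw [hcoe, ← IntermediateField.adjoin_adjoin_left]
      rfl
    have hfd : FiniteDimensional ℚ (restrictScalars ℚ E⟮a⟯) := FiniteDimensional.trans ℚ E E⟮a⟯
    have hrank : Module.finrank ℚ (restrictScalars ℚ E⟮a⟯) ≤ N ^ (insert a t).card := by
      have h1 : Module.finrank ℚ (restrictScalars ℚ E⟮a⟯) =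
          Module.finrank ℚ E * Module.finrank E E⟮a⟯ :=
        (Module.finrank_mul_finrank ℚ E E⟮a⟯).symm
      have h2 : Module.finrank E E⟮a⟯ ≤ N := by
        rw [adjoin.finrank haE]
        exact le_trans (minpoly_tower_deg_le E haint) hadeg
      rw [h1, Finset.card_insert_of_notMem hat, pow_succ]
      exact Nat.mul_le_mul ihrank h2
    rw [hadj]
    exact ⟨hfd, hrank⟩

lemma coeff_minpoly_algebraic (E : IntermediateField ℚ ℂ) {α : ℂ} (hα : IsAlgebraic ℚ α) (i : ℕ) :
    IsAlgebraic ℚ (((minpoly E α).coeff i : E) : ℂ) := by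
  have hint : IsIntegral ℚ α := hα.isIntegral
  have hintE : IsIntegral E α := hint.tower_top
  set P := (minpoly E α).map (algebraMap E ℂ) with hPdef
  have hPmonic : P.Monic := (minpoly.monic hintE).map _
  have hdvd : P ∣ (minpoly ℚ α).map (algebraMap ℚ ℂ) := by
    have h1 := minpoly.dvd_map_of_isScalarTower ℚ E α
    have h2 := Polynomial.map_dvd (algebraMap E ℂ) h1
    rwa [Polynomial.map_map, ← IsScalarTower.algebraMap_eq] at h2
  have hroots : ∀ r ∈ P.roots, r ∈ algebraicClosure ℚ ℂ := by
    intro r hr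
    have hQne : (minpoly ℚ α).map (algebraMap ℚ ℂ) ≠ 0 := by
      simpa using minpoly.ne_zero hint
    have hle := Polynomial.roots.le_of_dvd hQne hdvd
    have hrQ : r ∈ ((minpoly ℚ α).map (algebraMap ℚ ℂ)).roots := Multiset.mem_of_le hle hr
    have hev := Polynomial.isRoot_of_mem_roots hrQ
    rw [mem_algebraicClosure_iff]
    refine ⟨minpoly ℚ α, minpoly.ne_zero hint, ?_⟩
    rw [Polynomial.aeval_def, ← Polynomial.eval_map]
    exact hev
  have hlift : P ∈ Polynomial.lifts (algebraMap (algebraicClosure ℚ ℂ) ℂ) := by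
    have hP : P = (P.roots.map (fun r => Polynomial.X - Polynomial.C r)).prod :=
      (IsAlgClosed.splits P).eq_prod_roots_of_monic hPmonic
    rw [hP]
    apply Subsemiring.multiset_prod_mem
    intro q hq
    obtain ⟨r, hr, rfl⟩ := Multiset.mem_map.mp hq
    exact ⟨Polynomial.X - Polynomial.C (⟨r, hroots r hr⟩ : algebraicClosure ℚ ℂ), by
      simp [Polynomial.map_sub]⟩
  obtain ⟨q, hq⟩ := hlift
  have hco : P.coeff i = algebraMap (algebraicClosure ℚ ℂ) ℂ (q.coeff i) := by
    rw [← hq]; simp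
  have hco2 : (((minpoly E α).coeff i : E) : ℂ) = P.coeff i := by
    rw [hPdef, Polynomial.coeff_map]; rfl
  rw [hco2, hco]
  exact mem_algebraicClosure_iff.mp (by
    simpa using (q.coeff i).2)

lemma mem_of_algebraic_adjoin_transcendental (E : IntermediateField ℚ ℂ) {x : ℂ}
    (hx : Transcendental E x) {α : ℂ} (hmem : α ∈ E⟮x⟯) (halg : IsAlgebraic E α) : α ∈ E := by
  obtain ⟨f, g, hfg⟩ := (mem_adjoin_simple_iff E α).mp hmem
  by_cases hg : (Polynomial.aeval x) g = 0
  · rw [hfg, hg, div_zero]; exact zero_mem E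
  have hmul : α * (Polynomial.aeval x) g = (Polynomial.aeval x) f := by
    rw [hfg]; field_simp
  set K := E⟮α⟯ with hK
  have hαK : α ∈ K := mem_adjoin_simple_self E α
  have hKfd : FiniteDimensional E K := adjoin.finiteDimensional halg.isIntegral
  set p : Polynomial K := f.map (algebraMap E K) - Polynomial.C (⟨α, hαK⟩ : K) *
    g.map (algebraMap E K) with hp
  have hev : (Polynomial.aeval x) p = 0 := by
    rw [hp]
    simp only [map_sub, map_mul, Polynomial.aeval_map_algebraMap, Polynomial.aeval_C]
    have : (algebraMap K ℂ) (⟨α, hαK⟩ : K) = α := rfl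
    rw [this, hmul, sub_self]
  by_cases hpz : p = 0
  · -- f = C α * g over K, extract coefficient
    have hfC : f.map (algebraMap E ℂ) = Polynomial.C α * g.map (algebraMap E ℂ) := by
      have := congrArg (Polynomial.map (algebraMap K ℂ)) (sub_eq_zero.mp (hp ▸ hpz))
      simp only [Polynomial.map_map, ← IsScalarTower.algebraMap_eq, Polynomial.map_mul,
        Polynomial.map_C] at this
      convert this using 2
      rfl
    have hgz : g ≠ 0 := by rintro rfl; simp at hg
    set j := g.natDegree
    have hgj : (g.coeff j : ℂ) ≠ 0 := by
      have h1 : g.coeff j ≠ 0 := Polynomial.leadingCoeff_ne_zero.mpr hgz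
      simpa using fun h => h1 (Subtype.ext h)
    have hcj : (f.coeff j : ℂ) = α * (g.coeff j : ℂ) := by
      have := congrArg (fun q => Polynomial.coeff q j) hfC
      simpa [Polynomial.coeff_map, Polynomial.coeff_C_mul] using this
    have : α = (f.coeff j : ℂ) / (g.coeff j : ℂ) := by
      rw [hcj]; field_simp
    rw [this]
    exact div_mem (f.coeff j).2 (g.coeff j).2
  · exfalso
    apply hx
    have hxK : IsAlgebraic K x := ⟨p, hpz, hev⟩
    have : Algebra.IsIntegral E K := Algebra.IsIntegral.of_finite E K
    exact (isIntegral_trans x hxK.isIntegral).isAlgebraic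

lemma step_bound (E : IntermediateField ℚ ℂ) (N : ℕ) (hN : 1 ≤ N)
    (hE : ∀ α ∈ E, IsAlgebraic ℚ α → (minpoly ℚ α).natDegree ≤ N) (a : ℂ) :
    ∃ N', 1 ≤ N' ∧ ∀ α ∈ E⟮a⟯, IsAlgebraic ℚ α → (minpoly ℚ α).natDegree ≤ N' := by
  by_cases ha : IsAlgebraic E a
  case neg =>
    refine ⟨N, hN, fun α hmem hα => ?_⟩
    have hαE : IsAlgebraic E α := IsAlgebraic.tower_top (↥E) hα
    exact hE α (mem_of_algebraic_adjoin_transcendental E ha hmem hαE) hα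
  case pos =>
    have hfd : FiniteDimensional E E⟮a⟯ := adjoin.finiteDimensional ha.isIntegral
    set d := Module.finrank E E⟮a⟯ with hd
    have hd1 : 1 ≤ d := Module.finrank_pos
    refine ⟨N ^ (d+1) * d, Nat.one_le_iff_ne_zero.mpr (by positivity), fun α hmem hα => ?_⟩
    have hαE : IsIntegral E α := (IsAlgebraic.tower_top (↥E) hα).isIntegral
    set p := minpoly E α with hp
    set dα := p.natDegree with hdα
    have hdα1 : 1 ≤ dα := minpoly.natDegree_pos hαE
    have hdαd : dα ≤ d := by
      have heq2 := minpoly.algebraMap_eq (A := E) (B := E⟮a⟯) (B' := ℂ)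
        (algebraMap E⟮a⟯ ℂ).injective ⟨α, hmem⟩
      have : minpoly E α = minpoly E (⟨α, hmem⟩ : E⟮a⟯) := by simpa using heq2
      rw [hdα, hp, this]
      exact minpoly.natDegree_le _
    -- the finset of coefficients
    set t : Finset ℂ := (Finset.range (dα+1)).image (fun i => ((p.coeff i : E) : ℂ)) with ht
    have htprop : ∀ x ∈ t, IsIntegral ℚ x ∧ (minpoly ℚ x).natDegree ≤ N := by
      intro x hx
      obtain ⟨i, _, rfl⟩ := Finset.mem_image.mp hx
      have halg := coeff_minpoly_algebraic E hα i
      exact ⟨halg.isIntegral, hE _ (p.coeff i).2 halg⟩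
    obtain ⟨hKfd, hKrank⟩ := adjoin_finset_bound hN t htprop
    set K := adjoin ℚ (t : Set ℂ) with hK
    have hmemK : ∀ i, i ∈ Finset.range (dα+1) → ((p.coeff i : E) : ℂ) ∈ K := by
      intro i hi
      apply IntermediateField.subset_adjoin
      exact Finset.mem_coe.mpr (Finset.mem_image_of_mem _ hi)
    have hcoeffK : ∀ i, ((p.coeff i : E) : ℂ) ∈ K := by
      intro i
      by_cases hi : i ≤ dα
      · exact hmemK i (Finset.mem_range.mpr (by omega))
      · have : p.coeff i = 0 := Polynomial.coeff_eq_zero_of_natDegree_lt (by omega)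
        rw [this]
        simpa using zero_mem K
    clear_value K
    -- build q over K
    set q : Polynomial K := ∑ i ∈ Finset.range (dα+1),
      Polynomial.C (⟨((p.coeff i : E) : ℂ), hcoeffK i⟩ : K) * Polynomial.X ^ i with hq
    have hqev : (Polynomial.aeval α) q = 0 := by
      have h1 : (Polynomial.aeval α) q = ∑ i ∈ Finset.range (dα+1),
          ((p.coeff i : E) : ℂ) * α ^ i := by
        rw [hq, map_sum]
        refine Finset.sum_congr rfl fun i _ => ?_
        simp only [map_mul, Polynomial.aeval_C, map_pow, Polynomial.aeval_X]
        rfl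
      have h2 : (Polynomial.aeval α) p = 0 := minpoly.aeval E α
      rw [Polynomial.aeval_eq_sum_range] at h2
      rw [h1]
      rw [show (∑ i ∈ Finset.range (dα+1), ((p.coeff i : E) : ℂ) * α ^ i)
          = ∑ i ∈ Finset.range (p.natDegree+1), p.coeff i • α ^ i from
        Finset.sum_congr rfl fun i _ => by rw [Algebra.smul_def]; rfl]
      exact h2
    have hqsplit : q = Polynomial.X ^ dα + ∑ i ∈ Finset.range dα,
        Polynomial.C (⟨((p.coeff i : E) : ℂ), hcoeffK i⟩ : K) * Polynomial.X ^ i := by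
      rw [hq, Finset.sum_range_succ]
      have hlead : (⟨((p.coeff dα : E) : ℂ), hcoeffK dα⟩ : K) = 1 := by
        have : p.coeff dα = 1 := by
          have hm : p.Monic := minpoly.monic hαE
          rw [hdα]; exact hm.coeff_natDegree
        apply Subtype.ext
        simp only [this]
        rfl
      rw [hlead, map_one, one_mul, add_comm]
    have hrdeg : (∑ i ∈ Finset.range dα,
        Polynomial.C (⟨((p.coeff i : E) : ℂ), hcoeffK i⟩ : K) * Polynomial.X ^ i).degree
        < (dα : WithBot ℕ) := by
      have hle : (∑ i ∈ Finset.range dα,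
          Polynomial.C (⟨((p.coeff i : E) : ℂ), hcoeffK i⟩ : K) * Polynomial.X ^ i).degree
          ≤ ((dα - 1 : ℕ) : WithBot ℕ) := by
        apply le_trans (Polynomial.degree_sum_le _ _)
        apply Finset.sup_le
        intro i hi
        refine le_trans (Polynomial.degree_C_mul_X_pow_le _ _) ?_
        have := Finset.mem_range.mp hi
        exact_mod_cast (by omega : i ≤ dα - 1)
      refine lt_of_le_of_lt hle ?_
      exact_mod_cast (by omega : dα - 1 < dα)
    have hqmonic : q.Monic := by
      rw [hqsplit]
      exact Polynomial.monic_X_pow_add hrdeg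
    have hqdeg : q.natDegree ≤ dα := by
      rw [hqsplit]
      apply Polynomial.natDegree_le_iff_degree_le.mpr
      apply le_trans (Polynomial.degree_add_le _ _)
      rw [max_le_iff]
      exact ⟨Polynomial.degree_X_pow_le _, le_of_lt hrdeg⟩
    have hKα : IsIntegral K α := ⟨q, hqmonic, hqev⟩
    have hminK : (minpoly K α).natDegree ≤ dα := by
      have := minpoly.min K α hqmonic hqev
      exact le_trans (Polynomial.natDegree_le_natDegree this) hqdeg
    have hfd2 : FiniteDimensional K K⟮α⟯ := adjoin.finiteDimensional hKα
    have hfdL : FiniteDimensional ℚ (restrictScalars ℚ K⟮α⟯) := FiniteDimensional.trans ℚ K K⟮α⟯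
    have hrank : Module.finrank ℚ (restrictScalars ℚ K⟮α⟯) ≤ N ^ (d+1) * d := by
      have h1 : Module.finrank ℚ (restrictScalars ℚ K⟮α⟯) =
          Module.finrank ℚ K * Module.finrank K K⟮α⟯ :=
        (Module.finrank_mul_finrank ℚ K K⟮α⟯).symm
      rw [h1]
      apply Nat.mul_le_mul
      · apply le_trans hKrank
        apply Nat.pow_le_pow_right (by omega)
        apply le_trans (Finset.card_image_le) (by simp; omega)
      · rw [adjoin.finrank hKα] at *
        omega
    have hαL : α ∈ restrictScalars ℚ K⟮α⟯ := mem_adjoin_simple_self K α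
    exact le_trans (deg_le_of_mem _ hαL) hrank

lemma adjoin_bound (s : Finset ℂ) :
    ∃ N, 1 ≤ N ∧ ∀ α ∈ adjoin ℚ (s : Set ℂ), IsAlgebraic ℚ α → (minpoly ℚ α).natDegree ≤ N := by
  classical
  induction s using Finset.induction_on with
  | empty =>
    refine ⟨1, le_refl 1, fun α hα _ => ?_⟩
    rw [Finset.coe_empty, IntermediateField.adjoin_empty, IntermediateField.mem_bot] at hα
    obtain ⟨r, rfl⟩ := hα
    rw [minpoly.eq_X_sub_C]
    simp
  | @insert a s' has ih =>
    obtain ⟨N, hN, hbound⟩ := ih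
    obtain ⟨N', hN', hbound'⟩ := step_bound (adjoin ℚ (s' : Set ℂ)) N hN hbound a
    refine ⟨N', hN', fun α hα halg => ?_⟩
    have hcoe : (↑(insert a s') : Set ℂ) = (s' : Set ℂ) ∪ {a} := by
      rw [Finset.coe_insert, Set.insert_eq, Set.union_comm]
    have hadj : adjoin ℚ (↑(insert a s') : Set ℂ) =
        restrictScalars ℚ (adjoin ℚ (s' : Set ℂ))⟮a⟯ := by
      rw [hcoe, ← IntermediateField.adjoin_adjoin_left]
      rfl
    rw [hadj] at hα
    exact hbound' α hα halg

lemma omega_bound {N : ℕ} {β ω : ℂ} (hβ : IsIntegral ℚ β)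
    (hdegβ : (minpoly ℚ β).natDegree ≤ N) (hrel : ω * β = ω^2 + 1) :
    (minpoly ℚ ω).natDegree ≤ N * 2 := by
  set B := ℚ⟮β⟯ with hB
  have hBfd : FiniteDimensional ℚ B := adjoin.finiteDimensional hβ
  have hBrank : Module.finrank ℚ B ≤ N := by
    rw [adjoin.finrank hβ]; exact hdegβ
  set β' : B := ⟨β, mem_adjoin_simple_self ℚ β⟩ with hβ'
  set q : Polynomial B := Polynomial.X ^ 2 + (Polynomial.C 1 - Polynomial.C β' * Polynomial.X)
    with hq
  have hqdeg2 : (Polynomial.C 1 - Polynomial.C β' * Polynomial.X : Polynomial B).degree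
      < (2 : WithBot ℕ) := by
    apply lt_of_le_of_lt (Polynomial.degree_sub_le _ _)
    rw [max_lt_iff]
    constructor
    · exact lt_of_le_of_lt Polynomial.degree_C_le (by norm_num)
    · apply lt_of_le_of_lt (Polynomial.degree_C_mul_X_le _) (by norm_num)
  have hqmonic : q.Monic := Polynomial.monic_X_pow_add hqdeg2
  have hqev : (Polynomial.aeval ω) q = 0 := by
    rw [hq]
    simp only [map_add, map_sub, map_pow, Polynomial.aeval_X, map_mul, Polynomial.aeval_C]
    have h1 : (algebraMap B ℂ) β' = β := rfl
    have h2 : (algebraMap B ℂ) 1 = 1 := map_one _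
    rw [h1, h2]
    linear_combination -hrel
  have hωint : IsIntegral B ω := ⟨q, hqmonic, hqev⟩
  have hfd2 : FiniteDimensional B B⟮ω⟯ := adjoin.finiteDimensional hωint
  have hrank2 : Module.finrank B B⟮ω⟯ ≤ 2 := by
    rw [adjoin.finrank hωint]
    have hd := minpoly.min B ω hqmonic hqev
    refine le_trans (Polynomial.natDegree_le_natDegree hd) ?_
    apply Polynomial.natDegree_le_iff_degree_le.mpr
    rw [hq]
    apply le_trans (Polynomial.degree_add_le _ _)
    rw [max_le_iff]
    exact ⟨Polynomial.degree_X_pow_le _, le_of_lt hqdeg2⟩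
  have hfdL : FiniteDimensional ℚ (restrictScalars ℚ B⟮ω⟯) := FiniteDimensional.trans ℚ B B⟮ω⟯
  have hrank : Module.finrank ℚ (restrictScalars ℚ B⟮ω⟯) ≤ N * 2 := by
    have h1 : Module.finrank ℚ (restrictScalars ℚ B⟮ω⟯) =
        Module.finrank ℚ B * Module.finrank B B⟮ω⟯ :=
      (Module.finrank_mul_finrank ℚ B B⟮ω⟯).symm
    rw [h1]
    exact Nat.mul_le_mul hBrank hrank2
  exact le_trans (deg_le_of_mem _ (mem_adjoin_simple_self B ω)) hrank

lemma exp_inj {θ₁ θ₂ : ℝ} (habs : |θ₁ - θ₂| < Real.pi)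
    (h : Complex.exp (2*θ₁*Complex.I) = Complex.exp (2*θ₂*Complex.I)) : θ₁ = θ₂ := by
  rw [Complex.exp_eq_exp_iff_exists_int] at h
  obtain ⟨n, hn⟩ := h
  have hC : (2*θ₁ : ℂ) = 2*θ₂ + n*(2*Real.pi) := by
    apply mul_right_cancel₀ Complex.I_ne_zero
    linear_combination hn
  have hr : (2*θ₁ : ℝ) = 2*θ₂ + n*(2*Real.pi) := by exact_mod_cast hC
  have hπ := Real.pi_pos
  have hd : θ₁ - θ₂ = n * Real.pi := by linarith
  have h1 : -Real.pi < θ₁ - θ₂ := (abs_lt.mp habs).1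
  have h2 : θ₁ - θ₂ < Real.pi := (abs_lt.mp habs).2
  have hn0 : n = 0 := by
    rcases lt_trichotomy n 0 with hlt|he|hgt
    · exfalso
      have hn1 : n ≤ -1 := by omega
      have : (n:ℝ) ≤ -1 := by exact_mod_cast hn1
      nlinarith
    · exact he
    · exfalso
      have : (1:ℝ) ≤ (n:ℝ) := by exact_mod_cast hgt
      nlinarith
  rw [hn0] at hd
  simp at hd
  linarith

lemma omega_pow (r : ℚ) :
    (Complex.exp (2*((((r:ℝ)*Real.pi : ℝ)) : ℂ)*Complex.I))^(2*r.den) = 1 := by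
  rw [← Complex.exp_nat_mul]
  have hC : ((r.den : ℂ)) * (r:ℂ) = (r.num:ℂ) := by exact_mod_cast Rat.den_mul_eq_num r
  have harg : ((2*r.den : ℕ) : ℂ) * (2*((((r:ℝ)*Real.pi : ℝ)) : ℂ)*Complex.I)
      = ((2*r.num : ℤ) : ℂ) * (2*Real.pi*Complex.I) := by
    push_cast
    linear_combination (4*(Real.pi:ℂ)*Complex.I) * hC
  rw [harg, Complex.exp_int_mul_two_pi_mul_I]

lemma cos_formula (θ : ℝ) :
    Complex.exp (2*θ*Complex.I) + (Complex.exp (2*θ*Complex.I))⁻¹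
      = 4*((Real.cos θ : ℂ))^2 - 2 := by
  have h1 : (Complex.exp (2*θ*Complex.I))⁻¹ = Complex.exp (-(2*θ*Complex.I)) := by
    rw [← Complex.exp_neg]
  rw [h1]
  have h2 : Complex.exp (2*θ*Complex.I) + Complex.exp (-(2*θ*Complex.I))
      = 2 * Complex.cos (2*θ) := by
    rw [Complex.two_cos]
    congr 1 <;> ring
  rw [h2, Complex.cos_two_mul, ← Complex.ofReal_cos]
  ring

/-- Let F be a subfield of ℂ that is finitely generated as a field extension of ℚ.
Then the set of θ ∈ [0, π] that are rational multiples of π with cos²θ ∈ F is finite. -/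
theorem stmt_1 (F : Subfield ℂ) (hF : ∃ s : Finset ℂ, F = Subfield.closure (s : Set ℂ)) :
    {θ : ℝ | θ ∈ Set.Icc 0 Real.pi ∧ (∃ r : ℚ, θ = (r : ℝ) * Real.pi) ∧
      ((Real.cos θ : ℂ)) ^ 2 ∈ F}.Finite := by
  obtain ⟨s, rfl⟩ := hF
  obtain ⟨N, hN, hbound⟩ := adjoin_bound s
  set K := adjoin ℚ (s : Set ℂ) with hK
  have hF_le : Subfield.closure (s : Set ℂ) ≤ K.toSubfield :=
    Subfield.closure_le.mpr (fun x hx => subset_adjoin ℚ _ hx)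
  set M := (2*(N*2))^(2*(N*2)) with hM
  set S := {θ : ℝ | θ ∈ Set.Icc 0 Real.pi ∧ (∃ r : ℚ, θ = (r : ℝ) * Real.pi) ∧
      ((Real.cos θ : ℂ)) ^ 2 ∈ Subfield.closure (s : Set ℂ)} with hS
  set f : ℝ → ℂ := fun θ => Complex.exp (2*θ*Complex.I) with hf
  have key : ∀ θ ∈ S, f θ ∈ {z : ℂ | ∃ n, 0 < n ∧ n ≤ M ∧ z ^ n = 1} := by
    rintro θ ⟨hIcc, ⟨r, rfl⟩, hcos⟩
    set ω := f ((r:ℝ)*Real.pi) with hω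
    have hk : ω ^ (2*r.den) = 1 := by
      simp only [hω, hf]
      exact omega_pow r
    have hkpos : 0 < 2*r.den := by positivity
    have hω0 : ω ≠ 0 := Complex.exp_ne_zero _
    set β : ℂ := ω + ω⁻¹ with hβ
    -- β ∈ K
    have hβK : β ∈ K := by
      simp only [hβ, hω, hf]
      rw [cos_formula]
      refine sub_mem (mul_mem ?_ (hF_le hcos)) ?_
      · have h := IntermediateField.natCast_mem K 4; exact_mod_cast h
      · have h := IntermediateField.natCast_mem K 2; exact_mod_cast h
    -- β integral over ℚ
    have hωint : IsIntegral ℚ ω := by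
      refine ⟨Polynomial.X ^ (2*r.den) - Polynomial.C 1,
        Polynomial.monic_X_pow_sub_C _ (by omega), ?_⟩
      simp [hk]
    have hinv : ω⁻¹ = ω ^ (2*r.den - 1) := by
      have hmul : ω ^ (2*r.den - 1) * ω = 1 := by
        rw [← pow_succ]
        rw [show 2*r.den - 1 + 1 = 2*r.den by omega]
        exact hk
      exact inv_eq_of_mul_eq_one_left hmul
    have hβint : IsIntegral ℚ β := by
      rw [hβ, hinv]
      exact hωint.add (hωint.pow _)
    have hdegβ : (minpoly ℚ β).natDegree ≤ N := hbound β hβK hβint.isAlgebraic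
    have hrel : ω * β = ω^2 + 1 := by
      rw [hβ]
      field_simp
    have hdegω : (minpoly ℚ ω).natDegree ≤ N * 2 := omega_bound hβint hdegβ hrel
    -- order of ω
    have hfin : IsOfFinOrder ω := isOfFinOrder_iff_pow_eq_one.mpr ⟨2*r.den, hkpos, hk⟩
    set m := orderOf ω with hm
    have hm0 : 0 < m := hfin.orderOf_pos
    have hprim : IsPrimitiveRoot ω m := IsPrimitiveRoot.orderOf ω
    have hphi : m.totient ≤ N * 2 := by
      have hcyc := Polynomial.cyclotomic_eq_minpoly_rat hprim hm0
      have : (Polynomial.cyclotomic m ℚ).natDegree = m.totient :=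
        Polynomial.natDegree_cyclotomic m ℚ
      rw [← this, hcyc]
      exact hdegω
    have hmM : m ≤ M := tot_bound hm0 hphi
    exact ⟨m, hm0, hmM, pow_orderOf_eq_one ω⟩
  -- injectivity on half-intervals
  have hinj1 : Set.InjOn f (S ∩ Set.Icc 0 (Real.pi/2)) := by
    rintro θ₁ ⟨_, h1⟩ θ₂ ⟨_, h2⟩ hfeq
    apply exp_inj ?_ hfeq
    have hπ := Real.pi_pos
    rw [Set.mem_Icc] at h1 h2
    rw [abs_lt]
    constructor <;> nlinarith [h1.1, h1.2, h2.1, h2.2]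
  have hinj2 : Set.InjOn f (S ∩ Set.Icc (Real.pi/2) Real.pi) := by
    rintro θ₁ ⟨_, h1⟩ θ₂ ⟨_, h2⟩ hfeq
    apply exp_inj ?_ hfeq
    have hπ := Real.pi_pos
    rw [Set.mem_Icc] at h1 h2
    rw [abs_lt]
    constructor <;> nlinarith [h1.1, h1.2, h2.1, h2.2]
  have hWfin := roots_of_unity_finite M
  have hfin1 : (S ∩ Set.Icc 0 (Real.pi/2)).Finite := by
    apply Set.Finite.of_finite_image ?_ hinj1
    apply hWfin.subset
    rintro z ⟨θ, hθ, rfl⟩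
    exact key θ hθ.1
  have hfin2 : (S ∩ Set.Icc (Real.pi/2) Real.pi).Finite := by
    apply Set.Finite.of_finite_image ?_ hinj2
    apply hWfin.subset
    rintro z ⟨θ, hθ, rfl⟩
    exact key θ hθ.1
  have : S ⊆ (S ∩ Set.Icc 0 (Real.pi/2)) ∪ (S ∩ Set.Icc (Real.pi/2) Real.pi) := by
    intro θ hθ
    have hIcc := Set.mem_Icc.mp hθ.1
    rcases le_or_gt θ (Real.pi/2) with h|h
    · exact Or.inl ⟨hθ, Set.mem_Icc.mpr ⟨hIcc.1, h⟩⟩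
    · exact Or.inr ⟨hθ, Set.mem_Icc.mpr ⟨le_of_lt h, hIcc.2⟩⟩
  exact Set.Finite.subset (hfin1.union hfin2) this
end

section
/- Let F be a subfield of ℂ, let T be a subfield of F with T = ℚ(S) for a set S algebraically independent over ℚ (allowing S = ∅, i.e. T = ℚ), and suppose the degree n = [F : T] is finite. If p, q are coprime positive integers and cos²((p/q)π) ∈ F, then φ(q) ≤ 2n, where φ is Euler's totient function. -/
set_option synthInstance.maxHeartbeats 1000000
set_option maxHeartbeats 4000000

open MvPolynomial

/-- Algebraic independence over ℚ extends to finite extensions of ℚ inside ℂ. -/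
lemma algInd_extend {σ : Type*} {y : σ → ℂ}
    (h : AlgebraicIndependent ℚ y) (L : IntermediateField ℚ ℂ) [FiniteDimensional ℚ L] :
    AlgebraicIndependent (↥L) y := by
  rw [algebraicIndependent_iff_injective_aeval] at h ⊢
  letI : Algebra (MvPolynomial σ ℚ) (MvPolynomial σ ↥L) :=
    (MvPolynomial.map (algebraMap ℚ ↥L)).toAlgebra
  have halg : ∀ P : MvPolynomial σ ℚ,
      algebraMap (MvPolynomial σ ℚ) (MvPolynomial σ ↥L) P
        = MvPolynomial.map (algebraMap ℚ ↥L) P := fun _ => rfl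
  let b := Module.finBasis ℚ ↥L
  have hspan : Submodule.span (MvPolynomial σ ℚ)
      (Set.range fun j => (MvPolynomial.C (b j) : MvPolynomial σ ↥L)) = ⊤ := by
    rw [eq_top_iff]
    rintro P -
    induction P using MvPolynomial.induction_on with
    | C a =>
      rw [← b.sum_repr a, map_sum]
      refine Submodule.sum_mem _ fun j _ => ?_
      have : (MvPolynomial.C ((b.repr a j) • b j) : MvPolynomial σ ↥L)
          = (MvPolynomial.C (b.repr a j) : MvPolynomial σ ℚ) • MvPolynomial.C (b j) := by
        rw [Algebra.smul_def, Algebra.smul_def, halg, MvPolynomial.map_C, ← map_mul]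
      rw [this]
      exact Submodule.smul_mem _ _ (Submodule.subset_span ⟨j, rfl⟩)
    | add p q hp hq => exact Submodule.add_mem _ hp hq
    | mul_X p i hp =>
      have : p * MvPolynomial.X i = (MvPolynomial.X i : MvPolynomial σ ℚ) • p := by
        rw [Algebra.smul_def, halg, MvPolynomial.map_X, mul_comm]
      rw [this]
      exact Submodule.smul_mem _ _ hp
  haveI : Module.Finite (MvPolynomial σ ℚ) (MvPolynomial σ ↥L) :=
    ⟨Submodule.fg_def.mpr ⟨_, Set.finite_range _, hspan⟩⟩
  haveI : Algebra.IsIntegral (MvPolynomial σ ℚ) (MvPolynomial σ ↥L) :=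
    Algebra.IsIntegral.of_finite (MvPolynomial σ ℚ) (MvPolynomial σ ↥L)
  set f := (MvPolynomial.aeval y : MvPolynomial σ ↥L →ₐ[↥L] ℂ) with hf
  have hcomp : (f : MvPolynomial σ ↥L →+* ℂ).comp
      (algebraMap (MvPolynomial σ ℚ) (MvPolynomial σ ↥L))
      = ((MvPolynomial.aeval y : MvPolynomial σ ℚ →ₐ[ℚ] ℂ) : MvPolynomial σ ℚ →+* ℂ) := by
    apply MvPolynomial.ringHom_ext
    · intro r
      simp only [RingHom.comp_apply, halg, MvPolynomial.map_C]
      simp [hf, ← IsScalarTower.algebraMap_apply]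
    · intro i
      simp only [RingHom.comp_apply, halg, MvPolynomial.map_X]
      simp [hf]
  have hker : RingHom.ker (f : MvPolynomial σ ↥L →+* ℂ) = ⊥ := by
    apply Ideal.eq_bot_of_comap_eq_bot (R := MvPolynomial σ ℚ)
    rw [RingHom.comap_ker, hcomp]
    exact (RingHom.injective_iff_ker_eq_bot _).mp h
  exact (RingHom.injective_iff_ker_eq_bot _).mpr hker

/-- Let F be a subfield of ℂ, T = ℚ(S) ⊆ F with S algebraically independent over
ℚ (S = ∅ allowed), and n = [F : T] finite. If p, q are coprime positive integers with
cos²((p/q)π) ∈ F, then φ(q) ≤ 2n. -/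
theorem stmt_6 (F : Subfield ℂ) (S : Set F)
    (hS : AlgebraicIndependent ℚ (fun x : ↥S => (x : F)))
    (hfin : FiniteDimensional (IntermediateField.adjoin ℚ S) F)
    (p q : ℕ) (hp : 0 < p) (hq : 0 < q) (hpq : Nat.Coprime p q)
    (hcos : ((Real.cos ((p / q : ℝ) * Real.pi) : ℂ)) ^ 2 ∈ F) :
    Nat.totient q ≤ 2 * Module.finrank (IntermediateField.adjoin ℚ S) F := by
  classical
  set K := IntermediateField.adjoin ℚ S with hKdef
  let g : ↥F →ₐ[ℚ] ℂ := (Subfield.subtype F).toRatAlgHom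
  have hginj : Function.Injective ⇑g := Subtype.coe_injective
  let y : ↥S → ℂ := fun s => ((s : ↥F) : ℂ)
  have hS' : AlgebraicIndependent ℚ y := hS.map' (f := g) hginj
  -- the root of unity
  set θ : ℝ := (p / q : ℝ) * Real.pi with hθdef
  set ζ : ℂ := Complex.exp (2 * ↑Real.pi * Complex.I * (↑p / ↑q)) with hζdef
  have hζprim : IsPrimitiveRoot ζ q := Complex.isPrimitiveRoot_exp_of_coprime p q hq.ne' hpq
  have hζ0 : ζ ≠ 0 := Complex.exp_ne_zero _
  have hζint : IsIntegral ℚ ζ := (hζprim.isIntegral hq).tower_top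
  set m := (minpoly ℚ ζ).natDegree with hmdef
  have hm : q.totient = m := by
    rw [hmdef, ← Polynomial.cyclotomic_eq_minpoly_rat hζprim hq, Polynomial.natDegree_cyclotomic]
  -- the quadratic relation
  set c : ℂ := 2 * (2 * ((Real.cos θ : ℂ)) ^ 2 - 1) with hcdef
  have hcF : c ∈ F := by
    have h2 : (2 : ℂ) ∈ F := by
      rw [show (2 : ℂ) = 1 + 1 by norm_num]
      exact F.add_mem F.one_mem F.one_mem
    exact F.mul_mem h2 (F.sub_mem (F.mul_mem h2 hcos) F.one_mem)
  have hζe : ζ = Complex.exp (((2 * θ : ℝ) : ℂ) * Complex.I) := by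
    rw [hζdef, hθdef]
    congr 1
    push_cast
    ring
  have hquad : ζ ^ 2 = c * ζ - 1 := by
    have h2c : c = 2 * Complex.cos ((2 * θ : ℝ) : ℂ) := by
      rw [← Complex.ofReal_cos, Real.cos_two_mul, hcdef]
      rw [Complex.ofReal_sub, Complex.ofReal_mul, Complex.ofReal_pow, Complex.ofReal_one,
        Complex.ofReal_ofNat]
    have key : ζ ^ 2 + 1 = (2 * Complex.cos ((2 * θ : ℝ) : ℂ)) * ζ := by
      rw [Complex.two_cos, hζe, sq, ← Complex.exp_add, add_mul, ← Complex.exp_add,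
        ← Complex.exp_add, show -(((2 * θ : ℝ) : ℂ)) * Complex.I + ((2 * θ : ℝ) : ℂ) * Complex.I
          = 0 by ring, Complex.exp_zero]
    rw [← h2c] at key
    linear_combination key
  -- the number field ℚ(ζ)
  set Kζ : IntermediateField ℚ ℂ := IntermediateField.adjoin ℚ {ζ} with hKζdef
  haveI : FiniteDimensional ℚ ↥Kζ := IntermediateField.adjoin.finiteDimensional hζint
  have hKζ : AlgebraicIndependent ↥Kζ y := algInd_extend hS' Kζ
  set gen : ↥Kζ := IntermediateField.AdjoinSimple.gen ℚ ζ with hgendef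
  have hgen : ∀ i : ℕ, algebraMap ↥Kζ ℂ (gen ^ i) = ζ ^ i := by
    intro i
    rw [map_pow]
    congr 1
  -- powers of ζ are linearly independent over ℚ
  have hpowLI : LinearIndependent ℚ (fun i : Fin m => ζ ^ (i : ℕ)) := by
    let pb := IntermediateField.adjoin.powerBasis hζint
    have h1 : LinearIndependent ℚ (⇑(Kζ.val.toLinearMap) ∘ ⇑pb.basis) :=
      pb.basis.linearIndependent.map' _ (LinearMap.ker_eq_bot.mpr Subtype.coe_injective)
    have h2 : (⇑(Kζ.val.toLinearMap) ∘ ⇑pb.basis) = fun i : Fin pb.dim => ζ ^ (i : ℕ) := by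
      funext i
      simp only [Function.comp_apply, pb.basis_eq_pow]
      have := hgen (i : ℕ)
      simp at this ⊢
      exact this
    rw [h2] at h1
    exact h1
  -- the algebra K → ℂ
  letI algKC : Algebra ↥K ℂ := ((Subfield.subtype F).comp (algebraMap ↥K ↥F)).toAlgebra
  have halgK : ∀ k : ↥K, algebraMap ↥K ℂ k = ((k : ↥F) : ℂ) := fun _ => rfl
  -- membership of K in the rational function field
  set T' : IntermediateField ℚ ℂ := IntermediateField.adjoin ℚ (Set.range y) with hT'def
  have hmemT' : ∀ k : ↥K, ((k : ↥F) : ℂ) ∈ T' := by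
    intro k
    have h1 : g (k : ↥F) ∈ (IntermediateField.adjoin ℚ S).map g := ⟨(k : ↥F), k.2, rfl⟩
    rw [IntermediateField.adjoin_map] at h1
    have h2 : ⇑g '' S = Set.range y := by
      rw [Set.image_eq_range]
      rfl
    rwa [h2] at h1
  -- powers of ζ are linearly independent over K
  have hLI : LinearIndependent ↥K (fun i : Fin m => ζ ^ (i : ℕ)) := by
    rw [Fintype.linearIndependent_iff]
    intro gg hgg
    have hrel : ∑ i : Fin m, ((gg i : ↥F) : ℂ) * ζ ^ (i : ℕ) = 0 := by
      have : ∀ i : Fin m, gg i • ζ ^ (i : ℕ) = ((gg i : ↥F) : ℂ) * ζ ^ (i : ℕ) := by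
        intro i
        rfl
      rw [← hgg]
      exact Finset.sum_congr rfl fun i _ => (this i).symm
    let kk : Fin m → ↥T' := fun i => ⟨((gg i : ↥F) : ℂ), hmemT' (gg i)⟩
    let r : Fin m → FractionRing (MvPolynomial ↥S ℚ) := fun i => hS'.reprField (kk i)
    obtain ⟨d, hd⟩ := IsLocalization.exist_integer_multiples
      (nonZeroDivisors (MvPolynomial ↥S ℚ)) Finset.univ r
    have hdd : ∀ i : Fin m, ∃ a : MvPolynomial ↥S ℚ,
        algebraMap (MvPolynomial ↥S ℚ) (FractionRing (MvPolynomial ↥S ℚ)) a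
          = (d : MvPolynomial ↥S ℚ) • r i := fun i => hd i (Finset.mem_univ i)
    choose A hA using hdd
    set Φ := IsFractionRing.lift (K := FractionRing (MvPolynomial ↥S ℚ))
      (algebraicIndependent_iff_injective_aeval.2 hS') with hΦdef
    have hΦa : ∀ P : MvPolynomial ↥S ℚ,
        Φ (algebraMap (MvPolynomial ↥S ℚ) (FractionRing (MvPolynomial ↥S ℚ)) P)
          = MvPolynomial.aeval y P := fun P => IsLocalization.lift_eq _ _
    set bb : ℂ := MvPolynomial.aeval y (d : MvPolynomial ↥S ℚ) with hbbdef
    have hbb0 : bb ≠ 0 := by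
      intro h0
      have hdz : (d : MvPolynomial ↥S ℚ) = 0 := by
        apply algebraicIndependent_iff_injective_aeval.2 hS'
        rw [map_zero]
        exact h0
      exact nonZeroDivisors.coe_ne_zero d hdz
    have hki : ∀ i : Fin m, bb * ((gg i : ↥F) : ℂ) = MvPolynomial.aeval y (A i) := by
      intro i
      have h1 : Φ ((d : MvPolynomial ↥S ℚ) • r i) = MvPolynomial.aeval y (A i) := by
        rw [← hA i]
        exact hΦa _
      rw [Algebra.smul_def, map_mul, hΦa] at h1
      have h2 : Φ (r i) = ((gg i : ↥F) : ℂ) := hS'.lift_reprField (kk i)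
      rw [h2] at h1
      exact h1
    have hrel2 : ∑ i : Fin m, (MvPolynomial.aeval y (A i)) * ζ ^ (i : ℕ) = 0 := by
      have : ∑ i : Fin m, (MvPolynomial.aeval y (A i)) * ζ ^ (i : ℕ)
          = bb * ∑ i : Fin m, ((gg i : ↥F) : ℂ) * ζ ^ (i : ℕ) := by
        rw [Finset.mul_sum]
        refine Finset.sum_congr rfl fun i _ => ?_
        rw [← hki i]
        ring
      rw [this, hrel, mul_zero]
    set B : MvPolynomial ↥S ↥Kζ :=
      ∑ i : Fin m, MvPolynomial.C (gen ^ (i : ℕ)) * MvPolynomial.map (algebraMap ℚ ↥Kζ) (A i)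
      with hBdef
    have hBz : MvPolynomial.aeval (R := ↥Kζ) y B = 0 := by
      rw [hBdef, map_sum, ← hrel2]
      refine Finset.sum_congr rfl fun i _ => ?_
      rw [map_mul, MvPolynomial.aeval_C, MvPolynomial.aeval_map_algebraMap, hgen]
      ring
    have hB0 : B = 0 := by
      apply algebraicIndependent_iff_injective_aeval.1 hKζ
      rw [hBz, map_zero]
    have hA0 : ∀ i : Fin m, A i = 0 := by
      intro i
      apply MvPolynomial.ext
      intro μ
      have hco : ∑ j : Fin m, (algebraMap ℚ ↥Kζ (MvPolynomial.coeff μ (A j))) * gen ^ (j : ℕ)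
          = 0 := by
        have h3 := congrArg (MvPolynomial.coeff μ) hB0
        rw [hBdef] at h3
        simp only [MvPolynomial.coeff_zero] at h3
        rw [← h3, MvPolynomial.coeff_sum]
        refine Finset.sum_congr rfl fun j _ => ?_
        rw [MvPolynomial.coeff_C_mul, MvPolynomial.coeff_map]
        ring
      have hco2 : ∑ j : Fin m, (MvPolynomial.coeff μ (A j)) • ζ ^ (j : ℕ) = 0 := by
        have h4 := congrArg (algebraMap ↥Kζ ℂ) hco
        rw [map_sum, map_zero] at h4
        rw [← h4]
        refine Finset.sum_congr rfl fun j _ => ?_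
        rw [map_mul, hgen, Algebra.smul_def, ← IsScalarTower.algebraMap_apply]
      have h5 := Fintype.linearIndependent_iff.mp hpowLI
        (fun j => MvPolynomial.coeff μ (A j)) hco2 i
      simpa using h5
    intro i
    have h6 : bb * ((gg i : ↥F) : ℂ) = 0 := by
      rw [hki i, hA0 i, map_zero]
    have h7 : ((gg i : ↥F) : ℂ) = 0 := by
      rcases mul_eq_zero.mp h6 with h | h
      · exact absurd h hbb0
      · exact h
    have h8 : (gg i : ↥F) = 0 := by exact_mod_cast h7
    exact_mod_cast h8
  -- the submodule F + ζF of ℂ over K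
  let W : Submodule ↥K ℂ :=
    { carrier := F
      add_mem' := fun ha hb => F.add_mem ha hb
      zero_mem' := F.zero_mem
      smul_mem' := fun k x hx => by
        have hs : k • x = ((k : ↥F) : ℂ) * x := by rfl
        rw [hs]
        exact F.mul_mem (k : ↥F).2 hx }
  have hWmem : ∀ x : ℂ, x ∈ W ↔ x ∈ F := fun x => Iff.rfl
  let eW : ↥F ≃ₗ[↥K] ↥W :=
    { toFun := fun x => ⟨(x : ℂ), x.2⟩
      map_add' := fun a b => rfl
      map_smul' := fun k x => by
        apply Subtype.ext
        have e1 : (k • x : ↥F) = algebraMap ↥K ↥F k * x := Algebra.smul_def k x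
        have e2 : k • ((x : ↥F) : ℂ) = ((k : ↥F) : ℂ) * ((x : ↥F) : ℂ) := by
          rfl
        show ((k • x : ↥F) : ℂ) = k • ((x : ↥F) : ℂ)
        rw [e1, e2]
        push_cast
        rfl
      invFun := fun x => ⟨x.1, x.2⟩
      left_inv := fun x => rfl
      right_inv := fun x => rfl }
  haveI hWfd : FiniteDimensional ↥K ↥W := Module.Finite.equiv eW
  have hWrank : Module.finrank ↥K ↥W = Module.finrank ↥K ↥F := eW.symm.finrank_eq
  let mulζ : ℂ →ₗ[↥K] ℂ := LinearMap.mulLeft ↥K ζ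
  have hmulinj : Function.Injective ⇑mulζ := fun a b hab => by
    simpa using mul_left_cancel₀ hζ0 hab
  let Wζ : Submodule ↥K ℂ := W.map mulζ
  haveI hWζfd : FiniteDimensional ↥K ↥Wζ := Module.Finite.map W mulζ
  have hWζrank : Module.finrank ↥K ↥Wζ = Module.finrank ↥K ↥W :=
    (Submodule.equivMapOfInjective mulζ hmulinj W).symm.finrank_eq
  let V : Submodule ↥K ℂ := W ⊔ Wζ
  haveI hVfd : FiniteDimensional ↥K ↥V := Submodule.finiteDimensional_sup W Wζ
  have hVle : Module.finrank ↥K ↥V ≤ Module.finrank ↥K ↥W + Module.finrank ↥K ↥Wζ :=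
    Submodule.finrank_add_le_finrank_add_finrank W Wζ
  have hmulV : ∀ v ∈ V, ζ * v ∈ V := by
    intro v hv
    obtain ⟨w, hw, z, hz, rfl⟩ := Submodule.mem_sup.mp hv
    obtain ⟨w', hw', rfl⟩ := hz
    have h1 : ζ * w ∈ Wζ := ⟨w, hw, rfl⟩
    have hz2 : ζ * (mulζ w') = c * (ζ * w') - w' := by
      show ζ * (ζ * w') = c * (ζ * w') - w'
      have : ζ * (ζ * w') = ζ ^ 2 * w' := by ring
      rw [this, hquad]
      ring
    have h3 : ζ * (c * w') ∈ Wζ := ⟨c * w', F.mul_mem hcF hw', rfl⟩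
    have h4 : c * (ζ * w') = ζ * (c * w') := by ring
    rw [mul_add, hz2, h4]
    exact V.add_mem (Submodule.mem_sup_right h1)
      (V.sub_mem (Submodule.mem_sup_right h3) (Submodule.mem_sup_left hw'))
  have hpow : ∀ i : ℕ, ζ ^ i ∈ V := by
    intro i
    induction i with
    | zero => exact Submodule.mem_sup_left (F.one_mem)
    | succ j hj =>
      rw [pow_succ, mul_comm]
      exact hmulV _ hj
  let v' : Fin m → ↥V := fun i => ⟨ζ ^ (i : ℕ), hpow i⟩
  have hv' : LinearIndependent ↥K v' := by
    apply LinearIndependent.of_comp V.subtype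
    exact hLI
  have hcount : m ≤ Module.finrank ↥K ↥V := by
    have := hv'.fintype_card_le_finrank
    simpa using this
  have h2n : Module.finrank ↥K ↥V ≤ 2 * Module.finrank ↥K ↥F := by
    calc Module.finrank ↥K ↥V ≤ Module.finrank ↥K ↥W + Module.finrank ↥K ↥Wζ := hVle
      _ = Module.finrank ↥K ↥F + Module.finrank ↥K ↥F := by rw [hWζrank, hWrank]
      _ = 2 * Module.finrank ↥K ↥F := by ring
  calc q.totient = m := hm
    _ ≤ Module.finrank ↥K ↥V := hcount
    _ ≤ 2 * Module.finrank ↥K ↥F := h2n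
end
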